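/- arXiv:2204.11214 — 2 statements merged into one kernel-verified Lean document; each statement's English description precedes it below -/
import Mathlib

section
/- Let H be a group, U an open subgroup of H that is a uniform pro-p group, and 0 → A → B → C → 0 an exact sequence of O_L[U]-modules such that p^a annihilates A and U acts trivially on both A and C. Then H possesses an open subgroup acting trivially on B; in fact the subgroup U_a = {h^{p^a} : h ∈ U} acts trivially on B. -/
/-- Let `H` be a (p-adic Lie) group, `U` an open subgroup which is a uniform
pro-`p` group (encoded by the subgroup `Ua` whose underlying set is the set of `p^a`-th powers
of elements of `U`, which is open), and `0 → A → B → C → 0` an exact sequence of `O_L[U]`-modules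
(encoded by the submodule `A` of `B`, the quotient being `C`) such that `p^a` kills `A` and `U`
acts trivially on `A` and on `C = B/A`. Then `H` has an open subgroup acting trivially on `B`;
in fact `U_a = {h^{p^a} : h ∈ U}` acts trivially on `B`. -/
theorem stmt_0 (p a : ℕ) (hp : p.Prime)
    (H : Type*) [Group H] [TopologicalSpace H] [IsTopologicalGroup H]
    (U Ua : Subgroup H) (hUopen : IsOpen (U : Set H))
    (hUa : (Ua : Set H) = (fun h : H => h ^ p ^ a) '' (U : Set H))
    (hUaopen : IsOpen (Ua : Set H))
    (R : Type*) [CommRing R]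
    (B : Type*) [AddCommGroup B] [Module R B] [DistribMulAction H B] [SMulCommClass H R B]
    (A : Submodule R B)
    (hAtriv : ∀ h ∈ U, ∀ x ∈ A, h • x = x)
    (hCtriv : ∀ h ∈ U, ∀ v : B, h • v - v ∈ A)
    (hkill : ∀ x ∈ A, (p ^ a : ℕ) • x = 0) :
    (∀ h ∈ U, ∀ v : B, (h ^ p ^ a) • v = v) ∧
      (∃ V : Subgroup H, IsOpen (V : Set H) ∧ ∀ g ∈ V, ∀ v : B, g • v = v) := by
  have key : ∀ h ∈ U, ∀ v : B, ∀ n : ℕ, (h ^ n) • v = v + n • (h • v - v) := by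
    intro h hh v n
    induction n with
    | zero => simp
    | succ n ih =>
      have hfix : h • (h • v - v) = h • v - v := hAtriv h hh _ (hCtriv h hh v)
      calc (h ^ (n + 1)) • v = h • (v + n • (h • v - v)) := by
            rw [pow_succ', mul_smul, ih]
        _ = h • v + n • (h • (h • v - v)) := by rw [smul_add, smul_comm]
        _ = v + (n + 1) • (h • v - v) := by rw [hfix, succ_nsmul]; abel
  have main : ∀ h ∈ U, ∀ v : B, (h ^ p ^ a) • v = v := by
    intro h hh v
    rw [key h hh v (p ^ a), hkill _ (hCtriv h hh v), add_zero]
  refine ⟨main, Ua, hUaopen, ?_⟩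
  intro g hg v
  have : g ∈ (Ua : Set H) := hg
  rw [hUa] at this
  obtain ⟨h, hh, rfl⟩ := this
  exact main h hh v
end

section
/- Let K be a compact p-adic Lie group acting continuously on a projective system of affinoid perfectoid spaces, such that the connected-components maps identify π_0(U_s) with K/Γ_s for closed subgroups Γ_s ⊂ Γ_{s+1} of K, and consider the projective system {Hom_cont(K/Γ_s, F_p)}_s. Then this projective system is eventually constant (in particular Mittag-Leffler); more precisely, since every compact p-adic Lie group K contains an open subgroup with the ascending chain condition on closed subgroups, the increasing chain Γ_s ⊂ Γ_{s+1} ⊂ ... of closed subgroups of K is stationary. -/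
noncomputable instance (n : ℕ) : TopologicalSpace (ZMod n) := ⊥

/-- Let `K` be a compact p-adic Lie group (the Lie-theoretic input, due to
[Glo, prop. 2.4], is encoded by the hypothesis `hLie`: `K` contains an open subgroup `K'`
such that every increasing sequence of closed subgroups of `K'` is stationary).  Let
`Γ_s ⊆ Γ_{s+1} ⊆ ⋯` be an increasing sequence of closed subgroups of `K`.  Then the chain
`(Γ_s)` is stationary, and consequently the projective system
`{Hom_cont(K/Γ_s, 𝔽_p)}_s` — realized as the sets of continuous homomorphisms `K → 𝔽_p`
vanishing on `Γ_s`, with transition maps the inclusions — is eventually constant (in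
particular Mittag-Leffler). -/
theorem stmt_15 (p : ℕ) [Fact p.Prime]
    {K : Type} [Group K] [TopologicalSpace K] [IsTopologicalGroup K] [CompactSpace K]
    (hLie : ∃ K' : Subgroup K, IsOpen (K' : Set K) ∧
      ∀ D : ℕ → Subgroup K, (∀ n, IsClosed (D n : Set K)) → (∀ n, D n ≤ K') → Monotone D →
        ∃ N, ∀ n ≥ N, D n = D N)
    (Γ : ℕ → Subgroup K)
    (hclosed : ∀ s, IsClosed (Γ s : Set K)) (hmono : Monotone Γ) :
    (∃ N, ∀ s ≥ N, Γ s = Γ N) ∧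
      (∃ N, ∀ s ≥ N,
        {f : K →* Multiplicative (ZMod p) | Continuous f ∧ ∀ γ ∈ Γ s, f γ = 1} =
          {f : K →* Multiplicative (ZMod p) | Continuous f ∧ ∀ γ ∈ Γ N, f γ = 1}) := by
  obtain ⟨K', hKopen, hACC⟩ := hLie
  -- the intersection chain
  set D : ℕ → Subgroup K := fun n => Γ n ⊓ K' with hD
  have hDclosed : ∀ n, IsClosed (D n : Set K) := fun n =>
    (hclosed n).inter (K'.isClosed_of_isOpen hKopen)
  have hDle : ∀ n, D n ≤ K' := fun n => inf_le_right
  have hDmono : Monotone D := fun a b hab => inf_le_inf_right _ (hmono hab)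
  obtain ⟨N₁, hN₁⟩ := hACC D hDclosed hDle hDmono
  -- the image chain in the finite coset space
  have hfin : Finite (K ⧸ K') := K'.quotient_finite_of_isOpen hKopen
  have hwf : WellFounded ((· > ·) : Set (K ⧸ K') → Set (K ⧸ K') → Prop) :=
    Finite.to_wellFoundedGT.wf
  set E : ℕ →o Set (K ⧸ K') :=
    ⟨fun n => (QuotientGroup.mk : K → K ⧸ K') '' (Γ n : Set K),
      fun a b hab => Set.image_mono (hmono hab)⟩ with hE
  obtain ⟨N₂, hN₂⟩ := wellFoundedGT_iff_monotone_chain_condition.mp ⟨hwf⟩ E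
  set N := max N₁ N₂ with hN
  have key : ∀ s ≥ N, Γ s = Γ N := by
    intro s hs
    have hs₁ : N₁ ≤ s := (le_max_left N₁ N₂).trans hs
    have hs₂ : N₂ ≤ s := (le_max_right N₁ N₂).trans hs
    refine le_antisymm (fun g hg => ?_) (hmono hs)
    have hEg : (QuotientGroup.mk g : K ⧸ K') ∈ E N := by
      rw [← hN₂ N (le_max_right N₁ N₂), hN₂ s hs₂]
      exact ⟨g, hg, rfl⟩
    obtain ⟨γ, hγ, hγg⟩ := hEg
    have hmem : γ⁻¹ * g ∈ K' := by
      rwa [QuotientGroup.eq] at hγg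
    have hmem2 : γ⁻¹ * g ∈ D s :=
      Subgroup.mem_inf.mpr ⟨(Γ s).mul_mem ((Γ s).inv_mem (hmono hs hγ)) hg, hmem⟩
    rw [hN₁ s hs₁] at hmem2
    have : γ⁻¹ * g ∈ Γ N := hmono (le_max_left N₁ N₂) hmem2.1
    simpa using mul_mem hγ this
  refine ⟨⟨N, key⟩, ⟨N, fun s hs => by rw [key s hs]⟩⟩
end
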